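/- For every n ≥ 1 and every algebraically closed field k, there exists a family of pairwise non-isomorphic simple n-dimensional modules over the free algebra k⟨X,Y⟩ indexed by a cofinite subset of k: fix a set M of n−1 elements of k, and for λ not in M ∪ {entries of M}, let X act on k^n by the diagonal matrix with diagonal entries λ and the elements of M, and let Y act by the cyclic permutation matrix sending e_1 ↦ e_2 ↦ ⋯ ↦ e_n ↦ e_1. Then each such module S(λ) is simple, and S(λ) ≅ S(μ) implies λ = μ. -/

import Mathlib

open scoped Classical
open Fin.NatCast

/-- A nonzero subspace invariant under a diagonal matrix with pairwise distinct
entries contains a standard basis vector. -/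
lemma aux_single_mem (k : Type) [Field k] (m : ℕ) (d : Fin m → k)
    (hd : Function.Injective d) (U : Submodule k (Fin m → k))
    (hU : ∀ u ∈ U, (Matrix.diagonal d).mulVec u ∈ U) :
    ∀ N : ℕ, ∀ u : Fin m → k, u ∈ U → u ≠ 0 →
      (Finset.univ.filter fun i => u i ≠ 0).card ≤ N →
      ∃ i, Pi.single i (1 : k) ∈ U := by
  intro N
  induction N with
  | zero =>
    intro u hu hne hcard
    exfalso
    apply hne
    funext i
    show u i = 0
    by_contra h
    have hi : i ∈ Finset.univ.filter fun i => u i ≠ 0 := by simp [h]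
    have := Finset.card_pos.mpr ⟨i, hi⟩
    omega
  | succ N ih =>
    intro u hu hne hcard
    obtain ⟨i, hi⟩ : ∃ i, u i ≠ 0 := by
      by_contra h
      push_neg at h
      exact hne (funext fun i => h i)
    by_cases hsingle : ∀ j, j ≠ i → u j = 0
    · refine ⟨i, ?_⟩
      have hmem : (u i)⁻¹ • u ∈ U := U.smul_mem _ hu
      have : Pi.single i (1 : k) = (u i)⁻¹ • u := by
        funext j
        by_cases hj : j = i
        · subst hj
          simp [Pi.single_apply, inv_mul_cancel₀ hi]
        · simp [Pi.single_apply, hj, hsingle j hj]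
      rw [this]
      exact hmem
    · push_neg at hsingle
      obtain ⟨j, hji, hj⟩ := hsingle
      set w : Fin m → k := (Matrix.diagonal d).mulVec u - d i • u with hw
      have hwU : w ∈ U := U.sub_mem (hU u hu) (U.smul_mem _ hu)
      have hwval : ∀ l, w l = (d l - d i) * u l := by
        intro l
        simp [hw, Matrix.mulVec_diagonal, sub_mul, Pi.sub_apply, smul_eq_mul,
          mul_comm (d i) (u l)]
      have hwi : w i = 0 := by rw [hwval]; ring
      have hwj : w j ≠ 0 :=
        hwval j ▸ mul_ne_zero (sub_ne_zero.2 fun h => hji (hd h)) hj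
      have hwne : w ≠ 0 := fun h => hwj (by rw [h]; rfl)
      apply ih w hwU hwne
      have hsub : (Finset.univ.filter fun l => w l ≠ 0) ⊆
          (Finset.univ.filter fun l => u l ≠ 0).erase i := by
        intro l hl
        simp only [Finset.mem_filter, Finset.mem_univ, true_and] at hl
        refine Finset.mem_erase.2 ⟨fun h => hl (h ▸ hwi), ?_⟩
        simp only [Finset.mem_filter, Finset.mem_univ, true_and]
        intro h
        exact hl (by rw [hwval, h, mul_zero])
      have h1 := Finset.card_le_card hsub
      have h2 : ((Finset.univ.filter fun l => u l ≠ 0).erase i).card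
          = (Finset.univ.filter fun l => u l ≠ 0).card - 1 :=
        Finset.card_erase_of_mem (by simp [hi])
      omega

theorem simple_modules_free_algebra
    (k : Type) [Field k] [IsAlgClosed k] (n : ℕ)
    (f : Fin n → k) (hf : Function.Injective f)
    (lam mu : k) (hlam : lam ∉ Set.range f) (hmu : mu ∉ Set.range f) :
    -- the matrices of the action for a given parameter
    letI x : k → Matrix (Fin (n + 1)) (Fin (n + 1)) k :=
      fun l => Matrix.diagonal (Fin.cons l f)
    letI y : Matrix (Fin (n + 1)) (Fin (n + 1)) k :=
      Matrix.of fun i j => if i = finRotate (n + 1) j then 1 else 0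
    -- simplicity of S(λ)
    (∀ U : Submodule k (Fin (n + 1) → k),
        (∀ u ∈ U, (x lam).mulVec u ∈ U) → (∀ u ∈ U, y.mulVec u ∈ U) →
        U = ⊥ ∨ U = ⊤) ∧
    -- non-isomorphy: an isomorphism S(λ) ≅ S(μ) forces λ = μ
    ((∃ P : (Fin (n + 1) → k) ≃ₗ[k] (Fin (n + 1) → k),
        (∀ v, P ((x lam).mulVec v) = (x mu).mulVec (P v)) ∧
        (∀ v, P (y.mulVec v) = y.mulVec (P v))) → lam = mu) := by
  beta_reduce
  -- injectivity of the diagonal of S(λ)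
  have hd : Function.Injective (Fin.cons lam f : Fin (n + 1) → k) := by
    intro a b hab
    induction a using Fin.cases with
    | zero =>
      induction b using Fin.cases with
      | zero => rfl
      | succ j =>
        simp only [Fin.cons_zero, Fin.cons_succ] at hab
        exact absurd ⟨j, hab.symm⟩ hlam
    | succ i =>
      induction b using Fin.cases with
      | zero =>
        simp only [Fin.cons_zero, Fin.cons_succ] at hab
        exact absurd ⟨i, hab⟩ hlam
      | succ j =>
        simp only [Fin.cons_succ] at hab
        exact congrArg Fin.succ (hf hab)
  -- action of y on basis vectors
  have hy : ∀ j : Fin (n + 1),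
      (Matrix.of fun i j => if i = finRotate (n + 1) j then (1 : k) else 0).mulVec
        (Pi.single j (1 : k)) = Pi.single (j + 1) (1 : k) := by
    intro j
    funext i
    rw [Matrix.mulVec_single]
    simp [Pi.single_apply, finRotate_succ_apply]
  constructor
  · -- simplicity
    intro U hxU hyU
    classical
    rcases eq_or_ne U ⊥ with hbot | hbot
    · exact Or.inl hbot
    right
    obtain ⟨u, huU, hune⟩ := Submodule.ne_bot_iff U |>.1 hbot
    obtain ⟨i₀, hi₀⟩ := aux_single_mem k (n + 1) (Fin.cons lam f) hd U hxU
      (Finset.univ.filter fun i => u i ≠ 0).card u huU hune le_rfl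
    -- propagate with y to all basis vectors
    have hall : ∀ t : ℕ, Pi.single (i₀ + (t : Fin (n + 1))) (1 : k) ∈ U := by
      intro t
      induction t with
      | zero => simpa using hi₀
      | succ t ihh =>
        have := hyU _ ihh
        rw [hy] at this
        have hcast : i₀ + ((t + 1 : ℕ) : Fin (n + 1))
            = i₀ + (t : Fin (n + 1)) + 1 := by
          push_cast
          simp [Nat.cast_succ, add_assoc]
        rw [hcast]
        exact this
    have hsingles : ∀ m : Fin (n + 1), Pi.single m (1 : k) ∈ U := by
      intro m
      have h0 := hall (m - i₀).val
      rw [Fin.cast_val_eq_self] at h0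
      have heq : i₀ + (m - i₀) = m := by abel
      have h3 : (Pi.single (i₀ + (m - i₀)) (1 : k) : Fin (n + 1) → k)
          = Pi.single m (1 : k) :=
        congrArg (fun z : Fin (n + 1) => (Pi.single z (1 : k) : Fin (n + 1) → k)) heq
      rw [← h3]
      exact h0
    rw [Submodule.eq_top_iff']
    intro v
    have : v = ∑ i, v i • (Pi.single i (1 : k) : Fin (n + 1) → k) := by
      conv_lhs => rw [← Finset.univ_sum_single v]
      refine Finset.sum_congr rfl fun i _ => ?_
      funext j
      simp [Pi.single_apply]
    rw [this]
    exact Submodule.sum_mem U fun i _ => U.smul_mem _ (hsingles i)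
  · -- non-isomorphy
    rintro ⟨P, hPx, hPy⟩
    have hx0 : (Matrix.diagonal (Fin.cons lam f)).mulVec
        (Pi.single (0 : Fin (n + 1)) (1 : k)) = lam • (Pi.single (0 : Fin (n + 1)) (1 : k) : Fin (n + 1) → k) := by
      funext i
      rw [Matrix.mulVec_diagonal]
      rcases eq_or_ne i 0 with h | h
      · subst h; simp
      · simp [Pi.single_apply, h]
    set v : Fin (n + 1) → k := P (Pi.single 0 1) with hv
    have h1 : (Matrix.diagonal (Fin.cons mu f)).mulVec v = lam • v := by
      rw [hv, ← hPx, hx0, map_smul]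
    have hvne : v ≠ 0 := by
      intro h
      have h0 : Pi.single (0 : Fin (n + 1)) (1 : k) = 0 :=
        P.injective (by rw [← hv, h, map_zero])
      have := congrFun h0 0
      simp at this
    obtain ⟨i, hi⟩ : ∃ i, v i ≠ 0 := by
      by_contra h
      push_neg at h
      exact hvne (funext fun i => h i)
    have h2 := congrFun h1 i
    rw [Matrix.mulVec_diagonal] at h2
    have hdi : (Fin.cons mu f : Fin (n + 1) → k) i = lam :=
      mul_right_cancel₀ hi (by simpa [smul_eq_mul] using h2)
    induction i using Fin.cases with
    | zero => simpa using hdi.symm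
    | succ j =>
      exact absurd ⟨j, by simpa using hdi⟩ hlam
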